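/- arXiv:1304.3177 — 2 statements merged into one kernel-verified Lean document; each statement's English description precedes it below -/
import Mathlib

section
/- Let G be a complete PE-CFG without ε expressions that is LL(1). Then for every parsing expression p occurring in G (a subexpression of p_S or of some P(A)) and all strings x, y over T: G[p] xy ⤳CFG y if and only if G[p] xy ⤳PEG y. -/
/-- Parsing expressions over non-terminals `V` and terminals `T`. -/
inductive PExp (V T : Type) : Type where
  | eps : PExp V T
  | term : T → PExp V T
  | var : V → PExp V T
  | cat : PExp V T → PExp V T → PExp V T
  | alt : PExp V T → PExp V T → PExp V T

/-- The relation `G[p] v ⤳CFG w`, where the PE-CFG is given by its production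
function `P` (the initial expression is the first explicit argument). -/
inductive CFGMatch {V T : Type} (P : V → PExp V T) : PExp V T → List T → List T → Prop where
  | empty (x : List T) : CFGMatch P .eps x x
  | term (a : T) (x : List T) : CFGMatch P (.term a) (a :: x) x
  | var {A : V} {v w : List T} : CFGMatch P (P A) v w → CFGMatch P (.var A) v w
  | cat {p₁ p₂ : PExp V T} {v u w : List T} :
      CFGMatch P p₁ v u → CFGMatch P p₂ u w → CFGMatch P (.cat p₁ p₂) v w
  | altL {p₁ p₂ : PExp V T} {v w : List T} :
      CFGMatch P p₁ v w → CFGMatch P (.alt p₁ p₂) v w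
  | altR {p₁ p₂ : PExp V T} {v w : List T} :
      CFGMatch P p₂ v w → CFGMatch P (.alt p₁ p₂) v w

/-- Result of a PEG match: either the remaining suffix of the input, or failure. -/
inductive Res (T : Type) : Type where
  | str : List T → Res T
  | fail : Res T

/-- The relation `G[p] x ⤳PEG X` (ordered choice, explicit failure). -/
inductive PEGMatch {V T : Type} (P : V → PExp V T) : PExp V T → List T → Res T → Prop where
  | empty (x : List T) : PEGMatch P .eps x (.str x)
  | termS (a : T) (x : List T) : PEGMatch P (.term a) (a :: x) (.str x)
  | termF {b a : T} (x : List T) : b ≠ a → PEGMatch P (.term b) (a :: x) .fail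
  | termE (a : T) : PEGMatch P (.term a) [] .fail
  | var {A : V} {x : List T} {r : Res T} : PEGMatch P (P A) x r → PEGMatch P (.var A) x r
  | catS {p₁ p₂ : PExp V T} {v u : List T} {r : Res T} :
      PEGMatch P p₁ v (.str u) → PEGMatch P p₂ u r → PEGMatch P (.cat p₁ p₂) v r
  | catF {p₁ p₂ : PExp V T} {v : List T} :
      PEGMatch P p₁ v .fail → PEGMatch P (.cat p₁ p₂) v .fail
  | ordS {p₁ p₂ : PExp V T} {v w : List T} :
      PEGMatch P p₁ v (.str w) → PEGMatch P (.alt p₁ p₂) v (.str w)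
  | ordB {p₁ p₂ : PExp V T} {v w : List T} :
      PEGMatch P p₁ v .fail → PEGMatch P p₂ v (.str w) → PEGMatch P (.alt p₁ p₂) v (.str w)
  | ordF {p₁ p₂ : PExp V T} {v : List T} :
      PEGMatch P p₁ v .fail → PEGMatch P p₂ v .fail → PEGMatch P (.alt p₁ p₂) v .fail

/-- `Subterm q p`: the expression `q` is a subexpression of `p`. -/
inductive Subterm {V T : Type} : PExp V T → PExp V T → Prop where
  | refl (p : PExp V T) : Subterm p p
  | catL {q p₁ p₂ : PExp V T} : Subterm q p₁ → Subterm q (.cat p₁ p₂)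
  | catR {q p₁ p₂ : PExp V T} : Subterm q p₂ → Subterm q (.cat p₁ p₂)
  | altL {q p₁ p₂ : PExp V T} : Subterm q p₁ → Subterm q (.alt p₁ p₂)
  | altR {q p₁ p₂ : PExp V T} : Subterm q p₂ → Subterm q (.alt p₁ p₂)

/-- `q` occurs in the grammar `(P, pS)`: it is a subexpression of the initial
expression `pS` or of some production `P A`. -/
def OccursIn {V T : Type} (P : V → PExp V T) (pS : PExp V T) (q : PExp V T) : Prop :=
  Subterm q pS ∨ ∃ A : V, Subterm q (P A)

/-- `FIRST^G(p)`: the terminals that can start a string matched by `G[p]`. -/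
def FIRST {V T : Type} (P : V → PExp V T) (p : PExp V T) : Set T :=
  {a : T | ∃ x y : List T, CFGMatch P p (a :: (x ++ y)) y}

/-- The grammar `(P, pS)` has no `ε` expressions. -/
def NoEps {V T : Type} (P : V → PExp V T) (pS : PExp V T) : Prop :=
  ¬ OccursIn P pS PExp.eps

/-- The grammar `(P, pS)` (without `ε` expressions) is LL(1): the `FIRST` sets
of the two alternatives of every choice occurring in the grammar are disjoint. -/
def IsLL1 {V T : Type} (P : V → PExp V T) (pS : PExp V T) : Prop :=
  ∀ q₁ q₂ : PExp V T, OccursIn P pS (.alt q₁ q₂) → FIRST P q₁ ∩ FIRST P q₂ = ∅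

/-- The grammar `(P, pS)` is complete: every expression occurring in it either
succeeds or fails (as a PEG) on every input. -/
def Complete {V T : Type} (P : V → PExp V T) (pS : PExp V T) : Prop :=
  ∀ p : PExp V T, OccursIn P pS p → ∀ x : List T,
    (∃ x' : List T, PEGMatch P p x (.str x')) ∨ PEGMatch P p x .fail

lemma subterm_trans {V T : Type} {q p r : PExp V T}
    (h1 : Subterm q p) (h2 : Subterm p r) : Subterm q r := by
  induction h2 with
  | refl => exact h1
  | catL _ ih => exact .catL ih
  | catR _ ih => exact .catR ih
  | altL _ ih => exact .altL ih
  | altR _ ih => exact .altR ih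

lemma occursIn_mono {V T : Type} {P : V → PExp V T} {pS p q : PExp V T}
    (hp : OccursIn P pS p) (hq : Subterm q p) : OccursIn P pS q := by
  rcases hp with h | ⟨A, h⟩
  · exact Or.inl (subterm_trans hq h)
  · exact Or.inr ⟨A, subterm_trans hq h⟩

lemma cfg_suffix {V T : Type} {P : V → PExp V T} {p : PExp V T} {v w : List T}
    (h : CFGMatch P p v w) : ∃ u, v = u ++ w := by
  induction h with
  | empty x => exact ⟨[], rfl⟩
  | term a x => exact ⟨[a], rfl⟩
  | var _ ih => exact ih
  | cat _ _ ih1 ih2 =>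
    rcases ih1 with ⟨u1, rfl⟩; rcases ih2 with ⟨u2, rfl⟩
    exact ⟨u1 ++ u2, (List.append_assoc _ _ _).symm⟩
  | altL _ ih => exact ih
  | altR _ ih => exact ih

lemma peg_to_cfg {V T : Type} {P : V → PExp V T} {p : PExp V T} {v : List T} {r : Res T}
    (h : PEGMatch P p v r) : ∀ w, r = .str w → CFGMatch P p v w := by
  induction h with
  | empty x => rintro w ⟨rfl⟩; exact .empty x
  | termS a x => rintro w ⟨rfl⟩; exact .term a x
  | termF x h => rintro w h'; cases h'
  | termE a => rintro w h'; cases h'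
  | var _ ih => intro w hw; exact .var (ih w hw)
  | catS _ _ ih1 ih2 => intro w hw; exact .cat (ih1 _ rfl) (ih2 w hw)
  | catF _ _ => rintro w h'; cases h'
  | ordS _ ih => rintro w ⟨rfl⟩; exact .altL (ih _ rfl)
  | ordB _ _ _ ih2 => rintro w ⟨rfl⟩; exact .altR (ih2 _ rfl)
  | ordF _ _ _ _ => rintro w h'; cases h'

lemma cfg_consumes {V T : Type} {P : V → PExp V T} {pS : PExp V T}
    (hnoeps : NoEps P pS) {p : PExp V T} {v w : List T}
    (h : CFGMatch P p v w) (hocc : OccursIn P pS p) : ∃ a u, v = a :: (u ++ w) := by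
  induction h with
  | empty x => exact absurd hocc hnoeps
  | term a x => exact ⟨a, [], rfl⟩
  | @var A _ _ _ ih => exact ih (Or.inr ⟨A, .refl _⟩)
  | cat _ h2 ih1 _ =>
    rcases ih1 (occursIn_mono hocc (.catL (.refl _))) with ⟨a, u1, rfl⟩
    rcases cfg_suffix h2 with ⟨u2, rfl⟩
    exact ⟨a, u1 ++ u2, by simp⟩
  | altL _ ih => exact ih (occursIn_mono hocc (.altL (.refl _)))
  | altR _ ih => exact ih (occursIn_mono hocc (.altR (.refl _)))

lemma cfg_to_peg {V T : Type} {P : V → PExp V T} {pS : PExp V T}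
    (hnoeps : NoEps P pS) (hll1 : IsLL1 P pS) (hcomplete : Complete P pS)
    {p : PExp V T} {v w : List T}
    (h : CFGMatch P p v w) (hocc : OccursIn P pS p) : PEGMatch P p v (.str w) := by
  induction h with
  | empty x => exact absurd hocc hnoeps
  | term a x => exact .termS a x
  | @var A _ _ _ ih => exact .var (ih (Or.inr ⟨A, .refl _⟩))
  | cat _ _ ih1 ih2 =>
    exact .catS (ih1 (occursIn_mono hocc (.catL (.refl _))))
      (ih2 (occursIn_mono hocc (.catR (.refl _))))
  | altL _ ih => exact .ordS (ih (occursIn_mono hocc (.altL (.refl _))))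
  | @altR p₁ p₂ v w h2 ih =>
    have hp1 : OccursIn P pS p₁ := occursIn_mono hocc (.altL (.refl _))
    have hp2 : OccursIn P pS p₂ := occursIn_mono hocc (.altR (.refl _))
    rcases hcomplete p₁ hp1 v with ⟨x', hx'⟩ | hf
    · exfalso
      have c1 : CFGMatch P p₁ v x' := peg_to_cfg hx' x' rfl
      rcases cfg_consumes hnoeps c1 hp1 with ⟨a, u1, hv1⟩
      rcases cfg_consumes hnoeps h2 hp2 with ⟨a', u2, hv2⟩
      rw [hv1] at hv2
      obtain ⟨rfl, -⟩ : a = a' ∧ _ := List.cons.injEq .. ▸ hv2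
      have h1 : a ∈ FIRST P p₁ := ⟨u1, x', hv1 ▸ c1⟩
      have hmem2 : a ∈ FIRST P p₂ := ⟨u2, w, by rw [hv1, hv2] at h2; exact h2⟩
      have := hll1 p₁ p₂ hocc
      exact absurd (Set.mem_inter h1 hmem2) (by rw [this]; exact Set.notMem_empty a)
    · exact .ordB hf (ih hp2)

/-- for a complete LL(1) PE-CFG without `ε` expressions, every
expression occurring in the grammar matches the same prefixes whether
interpreted as a CFG or as a PEG. -/
theorem stmt_7 {V T : Type} [Fintype V] [Fintype T]
    (P : V → PExp V T) (pS : PExp V T)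
    (hnoeps : NoEps P pS) (hll1 : IsLL1 P pS) (hcomplete : Complete P pS)
    (p : PExp V T) (hp : OccursIn P pS p) (x y : List T) :
    CFGMatch P p (x ++ y) y ↔ PEGMatch P p (x ++ y) (.str y) := by
  constructor
  · intro h; exact cfg_to_peg hnoeps hll1 hcomplete h hp
  · intro h; exact peg_to_cfg h y rfl
end

section
/- Let G be a right-linear PE-CFG and p a right-linear parsing expression. If L(G[p]) has the prefix property, then for every subexpression q of p, L(G[q]) has the prefix property. -/
/-- `L(G[p])`: the set of prefixes matched by `G[p]`. -/
def Lang {V T : Type} (P : V → PExp V T) (p : PExp V T) : Set (List T) :=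
  {x : List T | ∃ y : List T, CFGMatch P p (x ++ y) y}

/-- A language has the prefix property: no string in it is a proper prefix of
another string in it. -/
def PrefixProp {T : Type} (L : Set (List T)) : Prop :=
  ∀ x ∈ L, ∀ y ∈ L, x <+: y → x = y

/-- Right-linear parsing expressions: `ε`, a terminal, a non-terminal, a
concatenation of a terminal with a right-linear expression, or a choice of two
right-linear expressions. -/
inductive RightLin {V T : Type} : PExp V T → Prop where
  | eps : RightLin .eps
  | term (a : T) : RightLin (.term a)
  | var (A : V) : RightLin (.var A)
  | cat {a : T} {p₂ : PExp V T} : RightLin p₂ → RightLin (.cat (.term a) p₂)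
  | alt {p₁ p₂ : PExp V T} : RightLin p₁ → RightLin p₂ → RightLin (.alt p₁ p₂)


private lemma term_match_eq {V T : Type} {P : V → PExp V T} {a : T} {v w : List T}
    (h : CFGMatch P (.term a) v w) : v = a :: w := by cases h; rfl

private lemma lang_term_eq {V T : Type} {P : V → PExp V T} {a : T} {x : List T}
    (hx : x ∈ Lang P (.term a)) : x = [a] := by
  obtain ⟨y, h⟩ := hx
  have := term_match_eq h
  have : x ++ y = [a] ++ y := this
  exact (List.append_inj' this rfl).1

private lemma prefixProp_term {V T : Type} (P : V → PExp V T) (a : T) :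
    PrefixProp (Lang P (.term a)) := by
  intro x hx y hy _
  rw [lang_term_eq hx, lang_term_eq hy]

private lemma mem_lang_cat {V T : Type} {P : V → PExp V T} {a : T} {p₂ : PExp V T}
    {x : List T} (hx : x ∈ Lang P p₂) : a :: x ∈ Lang P (.cat (.term a) p₂) := by
  obtain ⟨y, h⟩ := hx
  exact ⟨y, .cat (.term a (x ++ y)) h⟩

private lemma prefixProp_of_cat {V T : Type} {P : V → PExp V T} {a : T} {p₂ : PExp V T}
    (h : PrefixProp (Lang P (.cat (.term a) p₂))) : PrefixProp (Lang P p₂) := by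
  intro x hx y hy hxy
  have := h (a :: x) (mem_lang_cat hx) (a :: y) (mem_lang_cat hy)
    (List.cons_prefix_cons.mpr ⟨rfl, hxy⟩)
  exact List.cons_injective.eq_iff.mp this

private lemma prefixProp_of_altL {V T : Type} {P : V → PExp V T} {p₁ p₂ : PExp V T}
    (h : PrefixProp (Lang P (.alt p₁ p₂))) : PrefixProp (Lang P p₁) := by
  intro x ⟨xy, hx⟩ y ⟨yy, hy⟩ hxy
  exact h x ⟨xy, .altL hx⟩ y ⟨yy, .altL hy⟩ hxy

private lemma prefixProp_of_altR {V T : Type} {P : V → PExp V T} {p₁ p₂ : PExp V T}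
    (h : PrefixProp (Lang P (.alt p₁ p₂))) : PrefixProp (Lang P p₂) := by
  intro x ⟨xy, hx⟩ y ⟨yy, hy⟩ hxy
  exact h x ⟨xy, .altR hx⟩ y ⟨yy, .altR hy⟩ hxy

/-- in a right-linear PE-CFG, if `L(G[p])` has the prefix
property for a right-linear `p`, then `L(G[q])` has the prefix property for
every subexpression `q` of `p`. -/
theorem stmt_16 {V T : Type} [Fintype V] [Fintype T]
    (P : V → PExp V T) (hG : ∀ A : V, RightLin (P A))
    (p : PExp V T) (hp : RightLin p)
    (hpref : PrefixProp (Lang P p)) :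
    ∀ q : PExp V T, Subterm q p → PrefixProp (Lang P q) := by
  induction hp with
  | eps => intro q hq; cases hq; exact hpref
  | term a => intro q hq; cases hq; exact hpref
  | var A => intro q hq; cases hq; exact hpref
  | cat h2 ih =>
    intro q hq
    cases hq with
    | refl => exact hpref
    | catL h => cases h; exact prefixProp_term P _
    | catR h => exact ih (prefixProp_of_cat hpref) q h
  | alt h1 h2 ih1 ih2 =>
    intro q hq
    cases hq with
    | refl => exact hpref
    | altL h => exact ih1 (prefixProp_of_altL hpref) q h
    | altR h => exact ih2 (prefixProp_of_altR hpref) q h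
end
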